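/- Let G be a connected graph on n vertices, n odd, such that exactly one vertex v has transmission n−1 and all other n−1 vertices have transmission n. Then G is isomorphic to the complete multipartite graph K_{1,2,...,2} with one part {v} of size 1 and (n−1)/2 parts of size 2. -/

import Mathlib

open SimpleGraph Matrix Finset BigOperators

/-- The distance matrix of a graph on `Fin n`, with real entries `d(u,v)`. -/
noncomputable def distMatrix {n : ℕ} (G : SimpleGraph (Fin n)) : Matrix (Fin n) (Fin n) ℝ :=
  fun u v => (G.dist u v : ℝ)

lemma distMatrix_isHermitian {n : ℕ} (G : SimpleGraph (Fin n)) :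
    (distMatrix G).IsHermitian := by
  unfold Matrix.IsHermitian
  ext u v
  simp [distMatrix, Matrix.conjTranspose_apply, SimpleGraph.dist_comm]

/-- The distance spectral radius: the largest eigenvalue of the distance matrix. -/
noncomputable def lambda1 {n : ℕ} (G : SimpleGraph (Fin n)) : ℝ :=
  ⨆ i, (distMatrix_isHermitian G).eigenvalues i

/-- The transmission of a vertex: the sum of distances to all other vertices. -/
noncomputable def transmission {n : ℕ} (G : SimpleGraph (Fin n)) (v : Fin n) : ℕ :=
  ∑ u, G.dist v u

/-- The maximum transmission. -/
noncomputable def Dmax {n : ℕ} (G : SimpleGraph (Fin n)) : ℕ :=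
  Finset.univ.sup (transmission G)

/-- The minimum transmission. -/
noncomputable def Dmin {n : ℕ} (G : SimpleGraph (Fin n)) : ℕ :=
  sInf (Set.range (transmission G))

/-- The Wiener index: half the sum of all transmissions. -/
noncomputable def wiener {n : ℕ} (G : SimpleGraph (Fin n)) : ℝ :=
  (∑ v, (transmission G v : ℝ)) / 2

/-- The complete multipartite graph `K_{1,2,…,2}` on `n = 2r-1` vertices:
vertex `0` forms the part of size 1, and `{2i-1, 2i}` are the parts of size 2. -/
def K122 (n : ℕ) : SimpleGraph (Fin n) where
  Adj u v := u ≠ v ∧ ¬(u.val ≠ 0 ∧ v.val ≠ 0 ∧ (u.val + 1) / 2 = (v.val + 1) / 2)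
  symm := by
    constructor
    intro u v h
    exact ⟨h.1.symm, fun hc => h.2 ⟨hc.2.1, hc.1, hc.2.2.symm⟩⟩
  loopless := by
    constructor
    intro u h
    exact h.1 rfl


def tval (x : ℕ) : ℕ := if x = 0 then 0 else if x % 2 = 1 then x + 1 else x - 1

lemma tval_invol (x : ℕ) : tval (tval x) = x := by
  unfold tval; split_ifs <;> first | exact False.elim ‹False› | omega

lemma tval_lt {n x : ℕ} (hn : n % 2 = 1) (hx : x < n) : tval x < n := by
  unfold tval; split_ifs <;> omega

def tperm (n : ℕ) (hn : n % 2 = 1) : Equiv.Perm (Fin n) :=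
  ⟨fun u => ⟨tval u.val, tval_lt hn u.isLt⟩,
   fun u => ⟨tval u.val, tval_lt hn u.isLt⟩,
   fun u => Fin.ext (tval_invol u.val),
   fun u => Fin.ext (tval_invol u.val)⟩

lemma tperm_val {n : ℕ} (hn : n % 2 = 1) (x : Fin n) : (tperm n hn x).val = tval x.val := rfl

lemma K122_adj_iff {n : ℕ} (hn : n % 2 = 1) (x y : Fin n) :
    (K122 n).Adj x y ↔ x ≠ y ∧ tperm n hn x ≠ y := by
  have hx := x.isLt; have hy := y.isLt
  show (x ≠ y ∧ ¬ _) ↔ _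
  simp only [Ne, Fin.ext_iff, tperm_val]
  unfold tval
  split_ifs <;> omega

lemma cycleType_invol {α : Type*} [Fintype α] [DecidableEq α] (σ : Equiv.Perm α)
    (h2 : σ * σ = 1) (h1 : σ ≠ 1) :
    σ.cycleType = Multiset.replicate (σ.support.card / 2) 2 := by
  haveI : Fact (Nat.Prime 2) := ⟨Nat.prime_two⟩
  have ho : orderOf σ = 2 := orderOf_eq_prime (by rwa [pow_two]) h1
  obtain ⟨k, hk⟩ := Equiv.Perm.cycleType_prime_order (σ := σ) (by rw [ho]; exact Nat.prime_two)
  rw [ho] at hk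
  have hs := Equiv.Perm.sum_cycleType σ
  rw [hk, Multiset.sum_replicate, smul_eq_mul] at hs
  rw [hk]
  congr 1
  omega

lemma sum_eq_card_forall_one {α : Type*} (s : Finset α) (f : α → ℕ)
    (h1 : ∀ i ∈ s, 1 ≤ f i) (hs : ∑ i ∈ s, f i = s.card) : ∀ i ∈ s, f i = 1 := by
  intro i hi
  by_contra hne
  have h2 : 1 < f i := lt_of_le_of_ne (h1 i hi) (Ne.symm hne)
  have hlt : ∑ _j ∈ s, (1 : ℕ) < ∑ j ∈ s, f j := Finset.sum_lt_sum h1 ⟨i, hi, h2⟩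
  simp only [Finset.sum_const, smul_eq_mul, mul_one] at hlt
  omega


theorem stmt13 (n : ℕ) (hodd : Odd n) (G : SimpleGraph (Fin n)) (hG : G.Connected)
    (v : Fin n) (hv : transmission G v = n - 1)
    (hw : ∀ w : Fin n, w ≠ v → transmission G w = n) :
    Nonempty (G ≃g K122 n) := by
  classical
  have hodd' : n % 2 = 1 := Nat.odd_iff.mp hodd
  by_cases hn1 : n = 1
  · subst hn1
    refine ⟨⟨Equiv.refl _, ?_⟩⟩
    intro a b
    have hab : a = b := Subsingleton.elim a b
    subst hab
    simp
  have hn3 : 3 ≤ n := by omega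
  haveI : NeZero n := ⟨by omega⟩
  -- v is adjacent to every other vertex
  have hsumv : ∑ u ∈ Finset.univ.erase v, G.dist v u = n - 1 := by
    have h0 := hv
    unfold transmission at h0
    rw [← Finset.sum_erase_add Finset.univ _ (Finset.mem_univ v),
      SimpleGraph.dist_self] at h0
    omega
  have hdist1 : ∀ u, u ≠ v → G.dist v u = 1 := by
    intro u hu
    refine sum_eq_card_forall_one _ _ ?_ ?_ u
      (Finset.mem_erase.mpr ⟨hu, Finset.mem_univ u⟩)
    · intro i hi
      exact hG.pos_dist_of_ne (Ne.symm (Finset.mem_erase.mp hi).1)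
    · rw [hsumv, Finset.card_erase_of_mem (Finset.mem_univ v), Finset.card_univ,
        Fintype.card_fin]
  have hadjv : ∀ u, u ≠ v → G.Adj v u := fun u hu =>
    SimpleGraph.dist_eq_one_iff_adj.mp (hdist1 u hu)
  have hle1 : ∀ a : Fin n, G.dist v a ≤ 1 := by
    intro a
    by_cases h : a = v
    · subst h; simp [SimpleGraph.dist_self]
    · rw [hdist1 a h]
  have hdiam : ∀ a b : Fin n, G.dist a b ≤ 2 := by
    intro a b
    have ht := hG.dist_triangle (u := a) (v := v) (w := b)
    have h1 : G.dist a v ≤ 1 := by rw [SimpleGraph.dist_comm]; exact hle1 a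
    have h2 := hle1 b
    omega
  -- each w ≠ v has a unique non-neighbor besides itself
  have key : ∀ w : Fin n, ∃ u : Fin n, (w = v → u = v) ∧
      (w ≠ v → u ≠ w ∧ u ≠ v ∧ ∀ x, x ≠ w → (G.Adj w x ↔ x ≠ u)) := by
    intro w
    by_cases hwv : w = v
    · exact ⟨v, fun _ => rfl, fun h => absurd hwv h⟩
    have hdwv : G.dist w v = 1 := by rw [SimpleGraph.dist_comm]; exact hdist1 w hwv
    have hx12 : ∀ x : Fin n, x ≠ w → G.dist w x = 1 ∨ G.dist w x = 2 := by
      intro x hx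
      have h1 : 0 < G.dist w x := hG.pos_dist_of_ne (Ne.symm hx)
      have h2 := hdiam w x
      omega
    have hsumw : ∑ x ∈ Finset.univ.erase w, G.dist w x = n := by
      have h0 := hw w hwv
      unfold transmission at h0
      rw [← Finset.sum_erase_add Finset.univ _ (Finset.mem_univ w),
        SimpleGraph.dist_self] at h0
      omega
    have hcardw : (Finset.univ.erase w).card = n - 1 := by
      rw [Finset.card_erase_of_mem (Finset.mem_univ w), Finset.card_univ, Fintype.card_fin]
    have hsplit := Finset.sum_filter_add_sum_filter_not (Finset.univ.erase w)
      (fun x => G.dist w x = 2) (fun x => G.dist w x)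
    have hTsum : ∑ x ∈ (Finset.univ.erase w).filter (fun x => G.dist w x = 2), G.dist w x
        = 2 * ((Finset.univ.erase w).filter (fun x => G.dist w x = 2)).card := by
      rw [Finset.sum_congr rfl (fun x hx => (Finset.mem_filter.mp hx).2)]
      simp [Finset.sum_const, mul_comm]
    have hT1sum : ∑ x ∈ (Finset.univ.erase w).filter (fun x => ¬ G.dist w x = 2), G.dist w x
        = ((Finset.univ.erase w).filter (fun x => ¬ G.dist w x = 2)).card := by
      rw [Finset.card_eq_sum_ones]
      refine Finset.sum_congr rfl fun x hx => ?_
      have hm := Finset.mem_filter.mp hx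
      have h12 := hx12 x (Finset.mem_erase.mp hm.1).1
      have h2 := hm.2
      omega
    have hcards := Finset.card_filter_add_card_filter_not
      (s := Finset.univ.erase w) (p := fun x => G.dist w x = 2)
    have hTcard : ((Finset.univ.erase w).filter (fun x => G.dist w x = 2)).card = 1 := by
      omega
    obtain ⟨u, hu⟩ := Finset.card_eq_one.mp hTcard
    have huT : u ∈ (Finset.univ.erase w).filter (fun x => G.dist w x = 2) := by
      rw [hu]; exact Finset.mem_singleton_self u
    have humem := Finset.mem_filter.mp huT
    have huw : u ≠ w := (Finset.mem_erase.mp humem.1).1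
    have hud2 : G.dist w u = 2 := humem.2
    have huv : u ≠ v := by
      intro h
      rw [h, hdwv] at hud2
      omega
    refine ⟨u, fun h => absurd h hwv, fun _ => ⟨huw, huv, ?_⟩⟩
    intro x hxw
    constructor
    · intro hadj hxu
      subst hxu
      have := SimpleGraph.dist_eq_one_iff_adj.mpr hadj
      omega
    · intro hxu
      have hxT : x ∉ (Finset.univ.erase w).filter (fun x => G.dist w x = 2) := by
        rw [hu]; simpa using hxu
      have hne2 : ¬ G.dist w x = 2 := fun h2 =>
        hxT (Finset.mem_filter.mpr ⟨Finset.mem_erase.mpr ⟨hxw, Finset.mem_univ x⟩, h2⟩)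
      have h12 := hx12 x hxw
      exact SimpleGraph.dist_eq_one_iff_adj.mp (by omega)
  choose m hmv hm using key
  have hmvv : m v = v := hmv v rfl
  have hminv : Function.Involutive m := by
    intro w
    by_cases hwv : w = v
    · rw [hwv, hmvv, hmvv]
    obtain ⟨hmw, hmv', hmadj⟩ := hm w hwv
    obtain ⟨hm2, hm2v, hm2adj⟩ := hm (m w) hmv'
    have hnadj : ¬ G.Adj w (m w) := fun h => (hmadj (m w) hmw).mp h rfl
    have hnadj' : ¬ G.Adj (m w) w := fun h => hnadj h.symm
    have h3 : ¬ (w ≠ m (m w)) := fun hne => hnadj' ((hm2adj w (Ne.symm hmw)).mpr hne)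
    push_neg at h3
    exact h3.symm
  haveI : Nontrivial (Fin n) := Fin.nontrivial_iff_two_le.mpr (by omega)
  obtain ⟨w0, hw0⟩ := exists_ne v
  set σ : Equiv.Perm (Fin n) := Function.Involutive.toPerm m hminv with hσdef
  have hσapp : ∀ x, σ x = m x := fun x => rfl
  have hσne : σ ≠ 1 := by
    intro h
    have h1 : m w0 = w0 := congrArg (fun p : Equiv.Perm (Fin n) => p w0) h
    exact (hm w0 hw0).1 h1
  have hσ2 : σ * σ = 1 := Equiv.ext fun x => by
    simp only [Equiv.Perm.mul_apply, hσapp, hminv x, Equiv.Perm.one_apply]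
  have hσsupp : σ.support = Finset.univ.erase v := by
    ext x
    rw [Equiv.Perm.mem_support, Finset.mem_erase]
    constructor
    · intro h
      refine ⟨?_, Finset.mem_univ x⟩
      intro hxv
      subst hxv
      exact h ((hσapp x).trans hmvv)
    · rintro ⟨hxv, -⟩
      rw [hσapp]
      exact (hm x hxv).1
  have hσadj : ∀ a b : Fin n, G.Adj a b ↔ (a ≠ b ∧ m a ≠ b) := by
    intro a b
    by_cases hav : a = v
    · subst hav
      rw [hmvv]
      constructor
      · intro h; exact ⟨h.ne, h.ne⟩
      · rintro ⟨h, -⟩; exact hadjv b (Ne.symm h)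
    obtain ⟨hma, hmavne, hmadj⟩ := hm a hav
    by_cases hbv : b = v
    · subst hbv
      constructor
      · intro _; exact ⟨hav, hmavne⟩
      · intro _; exact (hadjv a hav).symm
    by_cases hab : a = b
    · subst hab; simp
    rw [hmadj b (Ne.symm hab)]
    constructor
    · intro h; exact ⟨hab, fun he => h he.symm⟩
    · rintro ⟨-, h⟩; exact fun he => h he.symm
  set τ : Equiv.Perm (Fin n) := tperm n hodd' with hτdef
  have hτ2 : τ * τ = 1 := Equiv.ext fun x => by
    apply Fin.ext
    simpa [hτdef, tperm, Equiv.Perm.mul_apply] using tval_invol x.val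
  have hτne : τ ≠ 1 := by
    intro h
    have h1 : (τ (⟨1, by omega⟩ : Fin n)).val = 1 := by rw [h]; rfl
    rw [hτdef, tperm_val] at h1
    simp [tval] at h1
  have hτsupp : τ.support = Finset.univ.erase (0 : Fin n) := by
    ext x
    rw [Equiv.Perm.mem_support, Finset.mem_erase]
    have hx := x.isLt
    constructor
    · intro h
      refine ⟨?_, Finset.mem_univ x⟩
      intro h0
      subst h0
      apply h
      apply Fin.ext
      rw [hτdef, tperm_val]
      simp [tval]
    · rintro ⟨h0, -⟩ h
      have heq : tval x.val = x.val := by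
        rw [← tperm_val hodd', ← hτdef, h]
      have hx0 : x.val ≠ 0 := fun hh => h0 (Fin.ext hh)
      unfold tval at heq
      split_ifs at heq <;> omega
  have hscard : σ.support.card = n - 1 := by
    rw [hσsupp, Finset.card_erase_of_mem (Finset.mem_univ v), Finset.card_univ,
      Fintype.card_fin]
  have htcard : τ.support.card = n - 1 := by
    rw [hτsupp, Finset.card_erase_of_mem (Finset.mem_univ (0 : Fin n)), Finset.card_univ,
      Fintype.card_fin]
  have hconj : IsConj σ τ := Equiv.Perm.isConj_iff_cycleType_eq.mpr (by
    rw [cycleType_invol σ hσ2 hσne, cycleType_invol τ hτ2 hτne, hscard, htcard])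
  obtain ⟨c, hc⟩ := isConj_iff.mp hconj
  have hce : ∀ x, τ (c x) = c (m x) := by
    intro x
    have h1 : (c * σ * c⁻¹) (c x) = τ (c x) := by rw [hc]
    rw [Equiv.Perm.mul_apply, Equiv.Perm.mul_apply, Equiv.Perm.inv_def, Equiv.symm_apply_apply, hσapp] at h1
    exact h1.symm
  refine ⟨⟨c, ?_⟩⟩
  intro a b
  rw [K122_adj_iff hodd', hσadj, ← hτdef, hce a]
  simp only [ne_eq, EmbeddingLike.apply_eq_iff_eq]
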